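/- Let u : ℕ → ℝ be a nonnegative sequence, let δ > 0, β > 0, and m ∈ ℕ. Let γ : ℕ → ℝ be a nonnegative sequence with ∑_n γ(n) = ∞, and let α : ℕ → ℝ be a sequence whose partial sums are bounded above, i.e., there is A ∈ ℝ with ∑_{n=m}^{m'} α(n) ≤ A for all m' ≥ m. Assume that for every n ≥ m, if u(n) > δ then u(n+1) ≤ u(n) − β·γ(n) + α(n). Then there exists n ≥ m with u(n) ≤ δ. -/

import Mathlib

open Filter

/-- Existence of a return time below level `δ`: if `u` is nonnegative and satisfies the
drift condition `u(n+1) ≤ u(n) − β·γ(n) + α(n)` whenever `u(n) > δ` (for `n ≥ m`),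
with `∑ γ(n) = ∞` and the partial sums of `α` from `m` bounded above, then
`u(n) ≤ δ` for some `n ≥ m`. -/
theorem exists_return_below_delta
    (u : ℕ → ℝ) (hu : ∀ n, 0 ≤ u n)
    (δ β : ℝ) (hδ : 0 < δ) (hβ : 0 < β) (m : ℕ)
    (γ : ℕ → ℝ) (hγ : ∀ n, 0 ≤ γ n)
    (hγdiv : Tendsto (fun m' => ∑ n ∈ Finset.range m', γ n) atTop atTop)
    (α : ℕ → ℝ) (A : ℝ)
    (hα : ∀ m' ≥ m, ∑ n ∈ Finset.Icc m m', α n ≤ A)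
    (h1 : ∀ n ≥ m, δ < u n → u (n + 1) ≤ u n - β * γ n + α n) :
    ∃ n ≥ m, u n ≤ δ := by
  by_contra h
  push_neg at h
  have key : ∀ k : ℕ, u (m + k + 1) ≤
      u m - β * ∑ n ∈ Finset.Icc m (m + k), γ n + ∑ n ∈ Finset.Icc m (m + k), α n := by
    intro k
    induction k with
    | zero =>
      simpa using h1 m le_rfl (h m le_rfl)
    | succ k ih =>
      have hstep := h1 (m + k + 1) (by omega) (h (m + k + 1) (by omega))
      have e : m + (k + 1) = (m + k) + 1 := by ring
      rw [e, Finset.sum_Icc_succ_top (by omega), Finset.sum_Icc_succ_top (by omega : m ≤ m + k + 1)]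
      nlinarith [hγ (m + k + 1)]
  -- derive contradiction
  have htail : Tendsto (fun k : ℕ => ∑ n ∈ Finset.Icc m (m + k), γ n) atTop atTop := by
    have : ∀ k, ∑ n ∈ Finset.Icc m (m + k), γ n
        = ∑ n ∈ Finset.range (m + k + 1), γ n - ∑ n ∈ Finset.range m, γ n := by
      intro k
      rw [← Finset.Ico_add_one_right_eq_Icc, Finset.sum_Ico_eq_sub _ (by omega)]
    simp only [this]
    apply tendsto_atTop_add_const_right
    exact hγdiv.comp (by simpa [add_comm, add_assoc, add_left_comm] using tendsto_add_atTop_nat (m + 1))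
  obtain ⟨k, hk⟩ := (htail.eventually_ge_atTop ((u m + A) / β)).exists
  have hAk := hα (m + k) (by omega)
  have := key k
  have hβk : u m + A ≤ β * ∑ n ∈ Finset.Icc m (m + k), γ n := by
    rw [div_le_iff₀ hβ] at hk
    linarith
  have := hu (m + k + 1)
  have hgt := h (m + k + 1) (by omega)
  linarith
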